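/- For every nonnegative integer n, there exist integers x, y, z such that n = x(x+1) + y(2y+1) + z(3z+1). -/

import Mathlib

def Q3 (a b c d e f x y z : ℤ) : ℤ := a*x^2 + b*y^2 + c*z^2 + 2*(d*x*y + e*x*z + f*y*z)
def B3 (a b c d e f x y z x' y' z' : ℤ) : ℤ :=
  a*x*x' + b*y*y' + c*z*z' + d*(x*y' + x'*y) + e*(x*z' + x'*z) + f*(y*z' + y'*z)
def D3 (a b c d e f : ℤ) : ℤ := a*b*c + 2*d*e*f - a*f^2 - b*e^2 - c*d^2
def det3 (m11 m12 m13 m21 m22 m23 m31 m32 m33 : ℤ) : ℤ :=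
  m11*(m22*m33 - m23*m32) - m12*(m21*m33 - m23*m31) + m13*(m21*m32 - m22*m31)

lemma q3_subst (a b c d e f m11 m12 m13 m21 m22 m23 m31 m32 m33 x y z : ℤ) :
    Q3 (Q3 a b c d e f m11 m21 m31) (Q3 a b c d e f m12 m22 m32) (Q3 a b c d e f m13 m23 m33)
       (B3 a b c d e f m11 m21 m31 m12 m22 m32) (B3 a b c d e f m11 m21 m31 m13 m23 m33)
       (B3 a b c d e f m12 m22 m32 m13 m23 m33) x y z
    = Q3 a b c d e f (m11*x + m12*y + m13*z) (m21*x + m22*y + m23*z) (m31*x + m32*y + m33*z) := by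
  unfold Q3 B3; ring

lemma d3_cov (a b c d e f m11 m12 m13 m21 m22 m23 m31 m32 m33 : ℤ) :
    D3 (Q3 a b c d e f m11 m21 m31) (Q3 a b c d e f m12 m22 m32) (Q3 a b c d e f m13 m23 m33)
       (B3 a b c d e f m11 m21 m31 m12 m22 m32) (B3 a b c d e f m11 m21 m31 m13 m23 m33)
       (B3 a b c d e f m12 m22 m32 m13 m23 m33)
    = D3 a b c d e f * (det3 m11 m12 m13 m21 m22 m23 m31 m32 m33)^2 := by
  unfold Q3 B3 D3 det3; ring

lemma master3 (A B C D E F x y z : ℤ) :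
    A * Q3 A B C D E F x y z = (A*x + D*y + E*z)^2 +
      ((A*B - D^2)*y^2 + 2*(A*F - D*E)*y*z + (A*C - E^2)*z^2) := by
  unfold Q3; ring

lemma detK3 (A B C D E F : ℤ) :
    (A*B - D^2)*(A*C - E^2) - (A*F - D*E)^2 = A * D3 A B C D E F := by
  unfold D3; ring

lemma scale3 (a b c d e f t x y z : ℤ) :
    Q3 a b c d e f (t*x) (t*y) (t*z) = t^2 * Q3 a b c d e f x y z := by unfold Q3; ring

-- adjugate identities (adj M) * (M w) = det3 • w
lemma adjL1 (m11 m12 m13 m21 m22 m23 m31 m32 m33 x y z : ℤ) :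
    (m22*m33 - m23*m32)*(m11*x + m12*y + m13*z) - (m12*m33 - m13*m32)*(m21*x + m22*y + m23*z)
      + (m12*m23 - m13*m22)*(m31*x + m32*y + m33*z)
    = det3 m11 m12 m13 m21 m22 m23 m31 m32 m33 * x := by unfold det3; ring
lemma adjL2 (m11 m12 m13 m21 m22 m23 m31 m32 m33 x y z : ℤ) :
    -(m21*m33 - m23*m31)*(m11*x + m12*y + m13*z) + (m11*m33 - m13*m31)*(m21*x + m22*y + m23*z)
      - (m11*m23 - m13*m21)*(m31*x + m32*y + m33*z)
    = det3 m11 m12 m13 m21 m22 m23 m31 m32 m33 * y := by unfold det3; ring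
lemma adjL3 (m11 m12 m13 m21 m22 m23 m31 m32 m33 x y z : ℤ) :
    (m21*m32 - m22*m31)*(m11*x + m12*y + m13*z) - (m11*m32 - m12*m31)*(m21*x + m22*y + m23*z)
      + (m11*m22 - m12*m21)*(m31*x + m32*y + m33*z)
    = det3 m11 m12 m13 m21 m22 m23 m31 m32 m33 * z := by unfold det3; ring

-- M * (adj M • v) = det3 • v
lemma adjR1 (m11 m12 m13 m21 m22 m23 m31 m32 m33 v1 v2 v3 : ℤ) :
    m11*((m22*m33 - m23*m32)*v1 - (m12*m33 - m13*m32)*v2 + (m12*m23 - m13*m22)*v3)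
    + m12*(-(m21*m33 - m23*m31)*v1 + (m11*m33 - m13*m31)*v2 - (m11*m23 - m13*m21)*v3)
    + m13*((m21*m32 - m22*m31)*v1 - (m11*m32 - m12*m31)*v2 + (m11*m22 - m12*m21)*v3)
    = det3 m11 m12 m13 m21 m22 m23 m31 m32 m33 * v1 := by unfold det3; ring
lemma adjR2 (m11 m12 m13 m21 m22 m23 m31 m32 m33 v1 v2 v3 : ℤ) :
    m21*((m22*m33 - m23*m32)*v1 - (m12*m33 - m13*m32)*v2 + (m12*m23 - m13*m22)*v3)
    + m22*(-(m21*m33 - m23*m31)*v1 + (m11*m33 - m13*m31)*v2 - (m11*m23 - m13*m21)*v3)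
    + m23*((m21*m32 - m22*m31)*v1 - (m11*m32 - m12*m31)*v2 + (m11*m22 - m12*m21)*v3)
    = det3 m11 m12 m13 m21 m22 m23 m31 m32 m33 * v2 := by unfold det3; ring
lemma adjR3 (m11 m12 m13 m21 m22 m23 m31 m32 m33 v1 v2 v3 : ℤ) :
    m31*((m22*m33 - m23*m32)*v1 - (m12*m33 - m13*m32)*v2 + (m12*m23 - m13*m22)*v3)
    + m32*(-(m21*m33 - m23*m31)*v1 + (m11*m33 - m13*m31)*v2 - (m11*m23 - m13*m21)*v3)
    + m33*((m21*m32 - m22*m31)*v1 - (m11*m32 - m12*m31)*v2 + (m11*m22 - m12*m21)*v3)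
    = det3 m11 m12 m13 m21 m22 m23 m31 m32 m33 * v3 := by unfold det3; ring

-- completion of a primitive vector to a unimodular matrix (first column)
lemma completion3 (x y z : ℤ) (h : Int.gcd (Int.gcd x y) z = 1) :
    ∃ m12 m13 m22 m23 m32 m33 : ℤ, (det3 x m12 m13 y m22 m23 z m32 m33)^2 = 1 := by
  rcases eq_or_ne (Int.gcd x y) 0 with hg | hg
  · have hx : x = 0 := Int.gcd_eq_zero_iff.mp hg |>.1
    have hy : y = 0 := Int.gcd_eq_zero_iff.mp hg |>.2
    have hz : z = 1 ∨ z = -1 := by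
      rw [hg] at h
      simp only [Nat.cast_zero, Int.gcd_zero_left] at h
      exact Int.natAbs_eq_iff.mp h |>.imp (by simp) (by simp)
    refine ⟨1, 0, 0, 1, 0, 0, ?_⟩
    subst hx hy
    rcases hz with h | h <;> subst h <;> unfold det3 <;> ring
  · have hgpos : (0:ℤ) < (Int.gcd x y : ℤ) := by exact_mod_cast Nat.pos_of_ne_zero hg
    obtain ⟨α, hα⟩ : ((Int.gcd x y : ℤ)) ∣ x := Int.gcd_dvd_left x y
    obtain ⟨β, hβ⟩ : ((Int.gcd x y : ℤ)) ∣ y := Int.gcd_dvd_right x y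
    have hb1 : ((Int.gcd x y : ℤ)) = x * Int.gcdA x y + y * Int.gcdB x y := Int.gcd_eq_gcd_ab x y
    have hb2 : ((1:ℤ)) = (Int.gcd x y : ℤ) * Int.gcdA (Int.gcd x y) z + z * Int.gcdB (Int.gcd x y) z := by
      have := Int.gcd_eq_gcd_ab ((Int.gcd x y : ℤ)) z
      rw [h] at this; exact_mod_cast this
    set g : ℤ := (Int.gcd x y : ℤ)
    set p' : ℤ := Int.gcdA x y
    set q' : ℤ := Int.gcdB x y
    set u : ℤ := Int.gcdA g z
    set w : ℤ := Int.gcdB g z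
    have hαβ : α * p' + β * q' = 1 := by
      apply mul_left_cancel₀ (ne_of_gt hgpos)
      rw [hα, hβ] at hb1; linarith [hb1]
    refine ⟨-q', -(w*α), p', -(w*β), 0, u, ?_⟩
    have hd : det3 x (-q') (-(w*α)) y p' (-(w*β)) z 0 u = 1 := by
      unfold det3
      linear_combination (p'*u) * hα + (q'*u) * hβ + (g*u + z*w) * hαβ - hb2
    rw [hd]; norm_num

lemma centered_div (m t : ℤ) (hm : 0 < m) : ∃ x r : ℤ, m*x + r = t ∧ 2*|r| ≤ m := by
  have h1 : 0 ≤ t % m := Int.emod_nonneg t (by omega)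
  have h2 : t % m < m := Int.emod_lt_of_pos t hm
  have h3 : m * (t / m) + t % m = t := Int.mul_ediv_add_emod t m
  rcases le_or_gt (2*(t % m)) m with h | h
  · exact ⟨t / m, t % m, h3, by rw [abs_of_nonneg h1]; omega⟩
  · exact ⟨t / m + 1, t % m - m, by linarith, by rw [abs_of_nonpos (by omega)]; omega⟩

lemma binary_min : ∀ (n : ℕ) (a d b : ℤ), a.natAbs ≤ n → 0 < a → 0 < a*b - d^2 →
    ∃ x y : ℤ, ¬(x = 0 ∧ y = 0) ∧ 0 < a*x^2 + 2*d*x*y + b*y^2 ∧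
      3*(a*x^2 + 2*d*x*y + b*y^2)^2 ≤ 4*(a*b - d^2) := by
  intro n
  induction n using Nat.strong_induction_on with
  | _ n IH =>
    intro a d b hn ha hD
    obtain ⟨k, r, hkr, hr⟩ := centered_div a d ha
    set b' : ℤ := a*k^2 - 2*d*k + b with hb'
    have hdet : a*b' - r^2 = a*b - d^2 := by rw [hb']; linear_combination (a*k - r - d) * hkr
    have h4r : 4*r^2 ≤ a^2 := by
      have := mul_self_le_mul_self (by positivity : (0:ℤ) ≤ 2*|r|) hr
      nlinarith [sq_abs r]
    have hb'pos : 0 < b' := by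
      rcases le_or_gt b' 0 with h | h
      · have : a * b' ≤ 0 := mul_nonpos_of_nonneg_of_nonpos (le_of_lt ha) h
        nlinarith [sq_nonneg r]
      · exact h
    rcases le_or_gt a b' with hc | hc
    · refine ⟨1, 0, by simp, by simpa using ha, ?_⟩
      nlinarith
    · have hlt : b'.natAbs < n := by
        have : b'.natAbs < a.natAbs := by omega
        omega
      obtain ⟨x, y, hxy, hpos, hbd⟩ := IH b'.natAbs hlt b' r a le_rfl hb'pos (by linarith [hdet])
      refine ⟨y - k*x, x, ?_, ?_, ?_⟩
      · rintro ⟨h1, h2⟩; subst h2; simp at h1; exact hxy ⟨rfl, by omega⟩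
      · have : a*(y - k*x)^2 + 2*d*(y - k*x)*x + b*x^2 = b'*x^2 + 2*r*x*y + a*y^2 := by
          rw [hb']; linear_combination (-2*x*y) * hkr
        rw [this]; exact hpos
      · have : a*(y - k*x)^2 + 2*d*(y - k*x)*x + b*x^2 = b'*x^2 + 2*r*x*y + a*y^2 := by
          rw [hb']; linear_combination (-2*x*y) * hkr
        rw [this]; linarith [hbd]


lemma adjQ (a b c d e f m11 m12 m13 m21 m22 m23 m31 m32 m33 v1 v2 v3 : ℤ) :
    Q3 (Q3 a b c d e f m11 m21 m31) (Q3 a b c d e f m12 m22 m32) (Q3 a b c d e f m13 m23 m33)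
       (B3 a b c d e f m11 m21 m31 m12 m22 m32) (B3 a b c d e f m11 m21 m31 m13 m23 m33)
       (B3 a b c d e f m12 m22 m32 m13 m23 m33)
       ((m22*m33 - m23*m32)*v1 - (m12*m33 - m13*m32)*v2 + (m12*m23 - m13*m22)*v3)
       (-(m21*m33 - m23*m31)*v1 + (m11*m33 - m13*m31)*v2 - (m11*m23 - m13*m21)*v3)
       ((m21*m32 - m22*m31)*v1 - (m11*m32 - m12*m31)*v2 + (m11*m22 - m12*m21)*v3)
    = (det3 m11 m12 m13 m21 m22 m23 m31 m32 m33)^2 * Q3 a b c d e f v1 v2 v3 := by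
  rw [q3_subst, adjR1, adjR2, adjR3, scale3]

lemma bin_split (JA JD JB : ℤ)
    (hpos : ∀ y z : ℤ, ¬(y = 0 ∧ z = 0) → 0 < JA*y^2 + 2*JD*y*z + JB*z^2)
    (hdet : JA*JB - JD^2 = 1) (M : ℤ)
    (hrep : ∃ y z : ℤ, JA*y^2 + 2*JD*y*z + JB*z^2 = M) :
    ∃ u v : ℤ, u^2 + v^2 = M := by
  have hJA : 0 < JA := by have := hpos 1 0 (by simp); linarith [this]; 
  obtain ⟨p₁, p₂, hp, hval, hbd⟩ := binary_min JA.natAbs JA JD JB le_rfl hJA (by rw [hdet]; norm_num)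
  have hval1 : JA*p₁^2 + 2*JD*p₁*p₂ + JB*p₂^2 = 1 := by nlinarith [hval, hbd]
  -- primitivity
  have hprim : Int.gcd p₁ p₂ = 1 := by
    have hg0 : Int.gcd p₁ p₂ ≠ 0 := by
      intro h; exact hp ⟨(Int.gcd_eq_zero_iff.mp h).1, (Int.gcd_eq_zero_iff.mp h).2⟩
    by_contra hg1
    obtain ⟨q₁, hq₁⟩ : ((Int.gcd p₁ p₂ : ℤ)) ∣ p₁ := Int.gcd_dvd_left p₁ p₂
    obtain ⟨q₂, hq₂⟩ : ((Int.gcd p₁ p₂ : ℤ)) ∣ p₂ := Int.gcd_dvd_right p₁ p₂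
    have hg2 : (2:ℤ) ≤ (Int.gcd p₁ p₂ : ℤ) := by
      have : 2 ≤ Int.gcd p₁ p₂ := by omega
      exact_mod_cast this
    have hqne : ¬(q₁ = 0 ∧ q₂ = 0) := by
      rintro ⟨h1, h2⟩; rw [h1, mul_zero] at hq₁; rw [h2, mul_zero] at hq₂
      exact hp ⟨hq₁, hq₂⟩
    have hqpos := hpos q₁ q₂ hqne
    have key : ∀ G u1 u2 : ℤ, p₁ = G*u1 → p₂ = G*u2 →
        JA*p₁^2 + 2*JD*p₁*p₂ + JB*p₂^2 = G^2 * (JA*u1^2 + 2*JD*u1*u2 + JB*u2^2) := by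
      intro G u1 u2 h1 h2; rw [h1, h2]; ring
    have := key _ _ _ hq₁ hq₂
    nlinarith
  have hbez : p₁ * Int.gcdA p₁ p₂ + p₂ * Int.gcdB p₁ p₂ = 1 := by
    have := Int.gcd_eq_gcd_ab p₁ p₂
    rw [hprim] at this; exact_mod_cast this.symm
  set s' : ℤ := Int.gcdA p₁ p₂
  set t' : ℤ := Int.gcdB p₁ p₂
  set JD' : ℤ := JA*p₁*(-t') + JD*(p₁*s' + (-t')*p₂) + JB*p₂*s' with hJD'
  set GB : ℤ := JA*t'^2 - 2*JD*t'*s' + JB*s'^2 with hGB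
  -- substitution identity
  have hsub : ∀ u v : ℤ, JA*(p₁*u - t'*v)^2 + 2*JD*(p₁*u - t'*v)*(p₂*u + s'*v) + JB*(p₂*u + s'*v)^2
      = (JA*p₁^2 + 2*JD*p₁*p₂ + JB*p₂^2)*u^2 + 2*JD'*u*v + GB*v^2 := by
    intro u v; rw [hJD', hGB]; ring
  have hdetc : (JA*p₁^2 + 2*JD*p₁*p₂ + JB*p₂^2)*GB - JD'^2
      = (JA*JB - JD^2)*(p₁*s' + p₂*t')^2 := by rw [hJD', hGB]; ring
  have hGB1 : GB = 1 + JD'^2 := by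
    rw [hval1, hbez, hdet] at hdetc; linarith [hdetc]
  obtain ⟨w2, w3, hw⟩ := hrep
  set ν2 : ℤ := s'*w2 + t'*w3 with hν2
  set ν3 : ℤ := -p₂*w2 + p₁*w3 with hν3
  have hVinv1 : p₁*ν2 - t'*ν3 = w2 := by rw [hν2, hν3]; linear_combination w2 * hbez
  have hVinv2 : p₂*ν2 + s'*ν3 = w3 := by rw [hν2, hν3]; linear_combination w3 * hbez
  refine ⟨ν2 + JD'*ν3, ν3, ?_⟩
  have := hsub ν2 ν3
  rw [hVinv1, hVinv2, hval1, hGB1] at this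
  rw [← hw, this]; ring

set_option maxHeartbeats 1600000 in
lemma red' (A B C D E F : ℤ) (m : ℕ) (hmpos : 0 < m) (hA : A = (m:ℤ))
    (hDetW : D3 A B C D E F = 1)
    (hWmin : ∀ x y z : ℤ, ¬(x = 0 ∧ y = 0 ∧ z = 0) → (m:ℤ) ≤ Q3 A B C D E F x y z)
    (N : ℤ) (hrepW : ∃ x y z : ℤ, Q3 A B C D E F x y z = N) :
    ∃ x y z : ℤ, x^2 + y^2 + z^2 = N := by
  have hmZ : (0:ℤ) < (m:ℤ) := by exact_mod_cast hmpos
  -- the quotient binary form K is positive definite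
  have hKpos : ∀ y z : ℤ, ¬(y = 0 ∧ z = 0) →
      0 < (A*B - D^2)*y^2 + 2*(A*F - D*E)*y*z + (A*C - E^2)*z^2 := by
    intro y z hyz
    obtain ⟨x, r, hxr, hr⟩ := centered_div (m:ℤ) (-(D*y + E*z)) hmZ
    have hmast := master3 A B C D E F x y z
    have hlin : (A*x + D*y + E*z)^2 = r^2 := by
      have : A*x + D*y + E*z = -r := by rw [hA]; linarith
      rw [this]; ring
    rw [hlin] at hmast
    have hQge := hWmin x y z (by rintro ⟨-, h2, h3⟩; exact hyz ⟨h2, h3⟩)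
    have h4r : 4*r^2 ≤ (m:ℤ)^2 := by
      have := mul_self_le_mul_self (by positivity : (0:ℤ) ≤ 2*|r|) hr
      nlinarith [sq_abs r]
    have h5 : (m:ℤ)^2 ≤ r^2 + ((A*B - D^2)*y^2 + 2*(A*F - D*E)*y*z + (A*C - E^2)*z^2) := by
      calc (m:ℤ)^2 = (m:ℤ)*(m:ℤ) := by ring
      _ ≤ (m:ℤ) * Q3 A B C D E F x y z := mul_le_mul_of_nonneg_left hQge (le_of_lt hmZ)
      _ = A * Q3 A B C D E F x y z := by rw [hA]
      _ = r^2 + _ := hmast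
    have hm2 : 0 < (m:ℤ)^2 := by positivity
    linarith
  have hKdet : (A*B - D^2)*(A*C - E^2) - (A*F - D*E)^2 = (m:ℤ) := by
    rw [detK3, hDetW, hA]; ring
  -- Hermite: m = 1
  have hKA : 0 < A*B - D^2 := by have := hKpos 1 0 (by simp); linarith [this]
  obtain ⟨y₁, z₁, hyz₁, hvpos, hvbd⟩ := binary_min (A*B - D^2).natAbs (A*B - D^2) (A*F - D*E)
    (A*C - E^2) le_rfl hKA (by rw [hKdet]; exact hmZ)
  have hm1 : m = 1 := by
    obtain ⟨x₁, r₁, hxr₁, hr₁⟩ := centered_div (m:ℤ) (-(D*y₁ + E*z₁)) hmZ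
    have hmast := master3 A B C D E F x₁ y₁ z₁
    have hlin : (A*x₁ + D*y₁ + E*z₁)^2 = r₁^2 := by
      have : A*x₁ + D*y₁ + E*z₁ = -r₁ := by rw [hA]; linarith
      rw [this]; ring
    rw [hlin] at hmast
    have hQge := hWmin x₁ y₁ z₁ (by rintro ⟨-, h2, h3⟩; exact hyz₁ ⟨h2, h3⟩)
    have h4r : 4*r₁^2 ≤ (m:ℤ)^2 := by
      have := mul_self_le_mul_self (by positivity : (0:ℤ) ≤ 2*|r₁|) hr₁
      nlinarith [sq_abs r₁]
    rw [hKdet] at hvbd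
    set val : ℤ := (A*B - D^2)*y₁^2 + 2*(A*F - D*E)*y₁*z₁ + (A*C - E^2)*z₁^2 with hvaldef
    clear_value val
    have h5 : (m:ℤ)^2 ≤ r₁^2 + val := by
      calc (m:ℤ)^2 = (m:ℤ)*(m:ℤ) := by ring
      _ ≤ (m:ℤ) * Q3 A B C D E F x₁ y₁ z₁ := mul_le_mul_of_nonneg_left hQge (le_of_lt hmZ)
      _ = A * Q3 A B C D E F x₁ y₁ z₁ := by rw [hA]
      _ = r₁^2 + val := hmast
    have e1 : 3*(m:ℤ)^2 ≤ 4*val := by linarith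
    have e2 : 9*((m:ℤ)^2)^2 ≤ 16*val^2 := by nlinarith [e1, hmZ, hvpos]
    have e3 : 27*((m:ℤ)^2)^2 ≤ 64*(m:ℤ) := by nlinarith [e2, hvbd]
    have e4 : (m:ℤ) ≤ 1 := by nlinarith [e3, hmZ]
    have : (1:ℤ) ≤ (m:ℤ) := by exact_mod_cast hmpos
    omega
  rw [hm1] at hA; simp at hA
  -- split off the represented N
  obtain ⟨x₂, y₂, z₂, hx₂⟩ := hrepW
  have hmast := master3 A B C D E F x₂ y₂ z₂
  rw [hx₂, hA, one_mul] at hmast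
  have hrepK : ∃ y z : ℤ, (A*B - D^2)*y^2 + 2*(A*F - D*E)*y*z + (A*C - E^2)*z^2
      = N - (1*x₂ + D*y₂ + E*z₂)^2 := by
    refine ⟨y₂, z₂, ?_⟩; rw [hA]; linarith [hmast]
  obtain ⟨u, v, huv⟩ := bin_split (A*B - D^2) (A*F - D*E) (A*C - E^2) hKpos
    (by rw [hKdet, hm1]; norm_num) _ hrepK
  exact ⟨1*x₂ + D*y₂ + E*z₂, u, v, by linarith [huv]⟩

lemma red (a b c d e f : ℤ)
    (hpos : ∀ x y z : ℤ, ¬(x = 0 ∧ y = 0 ∧ z = 0) → 0 < Q3 a b c d e f x y z)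
    (hdet : D3 a b c d e f = 1) (N : ℤ)
    (hrep : ∃ x y z : ℤ, Q3 a b c d e f x y z = N) :
    ∃ x y z : ℤ, x^2 + y^2 + z^2 = N := by
  classical
  -- the minimum of the form
  set S : Set ℕ := {k | 0 < k ∧ ∃ x y z : ℤ, ¬(x = 0 ∧ y = 0 ∧ z = 0) ∧
      Q3 a b c d e f x y z = (k:ℤ)} with hS
  have hSne : S.Nonempty := by
    have ha : 0 < Q3 a b c d e f 1 0 0 := hpos 1 0 0 (by simp)
    exact ⟨(Q3 a b c d e f 1 0 0).toNat, by
      constructor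
      · omega
      · exact ⟨1, 0, 0, by simp, by omega⟩⟩
  set m : ℕ := sInf S with hmdef
  obtain ⟨hmpos, x₀, y₀, z₀, hv₀, hQ₀⟩ := Nat.sInf_mem hSne
  have hminZ : ∀ x y z : ℤ, ¬(x = 0 ∧ y = 0 ∧ z = 0) → (m:ℤ) ≤ Q3 a b c d e f x y z := by
    intro x y z hne
    have hq := hpos x y z hne
    have : (Q3 a b c d e f x y z).toNat ∈ S := ⟨by omega, x, y, z, hne, by omega⟩
    have := Nat.sInf_le this
    omega
  -- primitivity of the minimal vector
  have hprim : Int.gcd (Int.gcd x₀ y₀) z₀ = 1 := by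
    set g : ℕ := Int.gcd (Int.gcd x₀ y₀) z₀ with hgdef
    have hdx : (g:ℤ) ∣ x₀ := dvd_trans (Int.gcd_dvd_left (↑(Int.gcd x₀ y₀)) z₀) (by exact_mod_cast Int.gcd_dvd_left x₀ y₀)
    have hdy : (g:ℤ) ∣ y₀ := dvd_trans (Int.gcd_dvd_left (↑(Int.gcd x₀ y₀)) z₀) (by exact_mod_cast Int.gcd_dvd_right x₀ y₀)
    have hdz : (g:ℤ) ∣ z₀ := Int.gcd_dvd_right (↑(Int.gcd x₀ y₀)) z₀
    by_contra hg1
    rcases Nat.lt_or_ge g 2 with h2 | h2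
    · interval_cases g
      · obtain ⟨x₁, hx₁⟩ := hdx; obtain ⟨y₁, hy₁⟩ := hdy; obtain ⟨z₁, hz₁⟩ := hdz
        simp at hx₁ hy₁ hz₁
        exact hv₀ ⟨hx₁, hy₁, hz₁⟩
      · exact hg1 rfl
    · obtain ⟨x₁, hx₁⟩ := hdx; obtain ⟨y₁, hy₁⟩ := hdy; obtain ⟨z₁, hz₁⟩ := hdz
      have hne : ¬(x₁ = 0 ∧ y₁ = 0 ∧ z₁ = 0) := by
        rintro ⟨h1, h2, h3⟩
        exact hv₀ ⟨by rw [hx₁, h1, mul_zero], by rw [hy₁, h2, mul_zero], by rw [hz₁, h3, mul_zero]⟩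
      have hsc : Q3 a b c d e f x₀ y₀ z₀ = (g:ℤ)^2 * Q3 a b c d e f x₁ y₁ z₁ := by
        rw [hx₁, hy₁, hz₁]; exact scale3 a b c d e f (g:ℤ) x₁ y₁ z₁
      have h1 := hminZ x₁ y₁ z₁ hne
      have hg2 : (4:ℤ) ≤ (g:ℤ)^2 := by
        have : (2:ℤ) ≤ (g:ℤ) := by exact_mod_cast h2
        nlinarith
      have : (m:ℤ) ≥ 4 * (m:ℤ) := by
        calc (m:ℤ) = Q3 a b c d e f x₀ y₀ z₀ := hQ₀.symm
        _ = (g:ℤ)^2 * Q3 a b c d e f x₁ y₁ z₁ := hsc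
        _ ≥ 4 * (m:ℤ) := by nlinarith [hpos x₁ y₁ z₁ hne]
      omega
  -- complete the minimal vector to a unimodular matrix and change basis
  obtain ⟨m12, m13, m22, m23, m32, m33, hU⟩ := completion3 x₀ y₀ z₀ hprim
  have hUne : det3 x₀ m12 m13 y₀ m22 m23 z₀ m32 m33 ≠ 0 := by
    intro h; rw [h] at hU; simp at hU
  set WA : ℤ := Q3 a b c d e f x₀ y₀ z₀ with hWA
  set WB : ℤ := Q3 a b c d e f m12 m22 m32 with hWB
  set WC : ℤ := Q3 a b c d e f m13 m23 m33 with hWC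
  set WD : ℤ := B3 a b c d e f x₀ y₀ z₀ m12 m22 m32 with hWD
  set WE : ℤ := B3 a b c d e f x₀ y₀ z₀ m13 m23 m33 with hWE
  set WF : ℤ := B3 a b c d e f m12 m22 m32 m13 m23 m33 with hWF
  have hAm : WA = (m:ℤ) := hQ₀
  have hDetW : D3 WA WB WC WD WE WF = 1 := by
    rw [hWA, hWB, hWC, hWD, hWE, hWF, d3_cov, hdet, hU, one_mul]
  have hWval : ∀ x y z : ℤ, Q3 WA WB WC WD WE WF x y z =
      Q3 a b c d e f (x₀*x + m12*y + m13*z) (y₀*x + m22*y + m23*z) (z₀*x + m32*y + m33*z) := by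
    intro x y z; rw [hWA, hWB, hWC, hWD, hWE, hWF, q3_subst]
  have hWmin : ∀ x y z : ℤ, ¬(x = 0 ∧ y = 0 ∧ z = 0) → (m:ℤ) ≤ Q3 WA WB WC WD WE WF x y z := by
    intro x y z hne
    rw [hWval]
    apply hminZ
    rintro ⟨hX, hY, hZ⟩
    have h1 := adjL1 x₀ m12 m13 y₀ m22 m23 z₀ m32 m33 x y z
    have h2 := adjL2 x₀ m12 m13 y₀ m22 m23 z₀ m32 m33 x y z
    have h3 := adjL3 x₀ m12 m13 y₀ m22 m23 z₀ m32 m33 x y z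
    rw [hX, hY, hZ] at h1 h2 h3
    simp at h1 h2 h3
    exact hne ⟨h1.resolve_left hUne, h2.resolve_left hUne, h3.resolve_left hUne⟩
  have hrepW : ∃ x y z : ℤ, Q3 WA WB WC WD WE WF x y z = N := by
    obtain ⟨P, Qq, R, hPQR⟩ := hrep
    refine ⟨(m22*m33 - m23*m32)*P - (m12*m33 - m13*m32)*Qq + (m12*m23 - m13*m22)*R,
      -(y₀*m33 - m23*z₀)*P + (x₀*m33 - m13*z₀)*Qq - (x₀*m23 - m13*y₀)*R,
      (y₀*m32 - m22*z₀)*P - (x₀*m32 - m12*z₀)*Qq + (x₀*m22 - m12*y₀)*R, ?_⟩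
    rw [hWA, hWB, hWC, hWD, hWE, hWF, adjQ, hU, one_mul, hPQR]
  exact red' WA WB WC WD WE WF m hmpos hAm hDetW hWmin N hrepW

set_option maxHeartbeats 1600000 in
lemma sum_three_squares (N : ℕ) (h8 : N % 8 = 3) :
    ∃ x y z : ℤ, x^2 + y^2 + z^2 = (N:ℤ) := by
  have hN3 : 3 ≤ N := by omega
  have hNodd : N % 2 = 1 := by omega
  have h4 : N % 4 = 3 := by omega
  haveI : NeZero (4*N) := ⟨by omega⟩
  -- Dirichlet: a prime q ≡ N-2 (mod 4N)
  have hcop : (N-2).Coprime (4*N) := by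
    have h1 : Nat.Coprime (N-2) 4 := by
      have h4eq : (4:ℕ) = 2^2 := by norm_num
      rw [h4eq, Nat.coprime_pow_right_iff (by norm_num)]
      exact Nat.coprime_two_right.mpr (Nat.odd_iff.mpr (by omega))
    have h2 : Nat.Coprime (N-2) N := by
      have hdvd2 : Nat.gcd (N-2) N ∣ 2 := by
        have := Nat.dvd_sub (Nat.gcd_dvd_right (N-2) N) (Nat.gcd_dvd_left (N-2) N)
        simpa [Nat.sub_sub_self (by omega : 2 ≤ N)] using this
      rcases (Nat.dvd_prime Nat.prime_two).mp hdvd2 with h | h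
      · exact h
      · exfalso
        obtain ⟨t, ht⟩ := h ▸ Nat.gcd_dvd_left (N-2) N
        omega
    exact Nat.Coprime.mul_right h1 h2
  have hunit : IsUnit ((N-2 : ℕ) : ZMod (4*N)) := (ZMod.isUnit_iff_coprime _ _).mpr hcop
  obtain ⟨q, hqgt, hqprime, hqmod⟩ := Nat.forall_exists_prime_gt_and_eq_mod hunit (4*N)
  haveI : Fact q.Prime := ⟨hqprime⟩
  have hqmodeq : q ≡ N-2 [MOD 4*N] := (ZMod.natCast_eq_natCast_iff _ _ _).mp hqmod
  have hq4 : q % 4 = 1 := by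
    have := hqmodeq.of_dvd ⟨N, rfl⟩
    unfold Nat.ModEq at this; omega
  have hqodd : q % 2 = 1 := by omega
  have hq2 : q ≠ 2 := by omega
  have hqN : q ≡ N - 2 [MOD N] := hqmodeq.of_dvd ⟨4, by ring⟩
  -- over ℤ: q + 2 = N * k
  obtain ⟨k, hk⟩ : ∃ k : ℤ, (q:ℤ) + 2 = (N:ℤ) * k := by
    have h1 : (N:ℕ) ∣ (q - (N-2)) := (Nat.modEq_iff_dvd' (by
      unfold Nat.ModEq at hqN; omega)).mp hqN.symm
    obtain ⟨t, ht⟩ := h1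
    have h2 : q + 2 = N + N*t := by omega
    refine ⟨(t:ℤ) + 1, ?_⟩
    have h3 : (q:ℤ) + 2 = (N:ℤ) + (N:ℤ)*(t:ℤ) := by exact_mod_cast h2
    linarith
  -- s with 2s = N+1
  obtain ⟨s, hs⟩ : ∃ s : ℤ, 2*s = (N:ℤ)+1 := ⟨((N:ℤ)+1)/2, by omega⟩
  -- Δ with N*Δ = 1 + 2*q*s^2
  set Δ : ℤ := -(N:ℤ) - 2 + 2*k*s^2 with hΔdef
  have hNΔ : (N:ℤ)*Δ = 1 + 2*(q:ℤ)*s^2 := by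
    rw [hΔdef]
    linear_combination (-2*s^2) * hk + (2*s + (N:ℤ) + 1) * hs
  have hqpos : (0:ℤ) < (q:ℤ) := by exact_mod_cast hqprime.pos
  have hNpos : (0:ℤ) < (N:ℤ) := by exact_mod_cast (by omega : 0 < N)
  have hΔpos : 0 < Δ := by
    rcases le_or_gt Δ 0 with h | h
    · have : (N:ℤ)*Δ ≤ 0 := mul_nonpos_of_nonneg_of_nonpos (le_of_lt hNpos) h
      nlinarith [sq_nonneg s]
    · exact h
  clear_value Δ
  -- -N is a square mod q
  have hqndvdN : ¬ (q ∣ N) := fun h => by have := Nat.le_of_dvd (by omega) h; omega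
  have hNne : ((N:ℤ) : ZMod q) ≠ 0 := by
    rw [Int.cast_natCast, Ne, ZMod.natCast_eq_zero_iff]; exact hqndvdN
  have hlegN : legendreSym q (N:ℤ) = 1 := by
    rw [jacobiSym.legendreSym.to_jacobiSym]
    rw [jacobiSym.quadratic_reciprocity_one_mod_four' (Nat.odd_iff.mpr hNodd) hq4]
    have hmod : ((q:ℤ)) % ((N:ℕ):ℤ) = (-2) % ((N:ℕ):ℤ) :=
      Int.ModEq.symm (Int.modEq_iff_dvd.mpr ⟨-k, by push_cast; linarith⟩).symm
    rw [jacobiSym.mod_left' hmod, jacobiSym.at_neg_two (Nat.odd_iff.mpr hNodd)]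
    rw [ZMod.χ₈'_nat_eq_if_mod_eight]
    simp [hNodd, h8]
  have hlegnegN : legendreSym q (-(N:ℤ)) = 1 := by
    have h0 : (-(N:ℤ)) = (-1) * (N:ℤ) := by ring
    rw [h0, legendreSym.mul, legendreSym.at_neg_one hq2, ZMod.χ₄_nat_one_mod_four hq4, hlegN]
    norm_num
  have hsqN : IsSquare ((-(N:ℤ) : ℤ) : ZMod q) := (legendreSym.eq_one_iff q (by
    rw [Int.cast_neg]; exact neg_ne_zero.mpr hNne)).mp hlegnegN
  -- hence -Δ is a square mod q
  have hNΔmod : ((N:ℤ) : ZMod q) * ((Δ:ℤ) : ZMod q) = 1 := by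
    have h1 : (((N:ℤ)*Δ : ℤ) : ZMod q) = ((1 + 2*(q:ℤ)*s^2 : ℤ) : ZMod q) := by rw [hNΔ]
    push_cast at h1
    simpa [ZMod.natCast_self] using h1
  have hsqΔ : IsSquare ((-Δ : ℤ) : ZMod q) := by
    obtain ⟨β, hβ⟩ := hsqN
    rw [Int.cast_neg] at hβ
    refine ⟨β * ((Δ:ℤ) : ZMod q), ?_⟩
    calc ((-Δ : ℤ) : ZMod q) = -(1 * ((Δ:ℤ) : ZMod q)) := by push_cast; ring
    _ = -((((N:ℤ):ZMod q) * ((Δ:ℤ):ZMod q)) * ((Δ:ℤ):ZMod q)) := by rw [hNΔmod]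
    _ = (-((N:ℤ):ZMod q)) * (((Δ:ℤ):ZMod q) * ((Δ:ℤ):ZMod q)) := by ring
    _ = (β*β) * (((Δ:ℤ):ZMod q) * ((Δ:ℤ):ZMod q)) := by rw [hβ]
    _ = β * ((Δ:ℤ):ZMod q) * (β * ((Δ:ℤ):ZMod q)) := by ring
  -- an integer b₀ with q ∣ b₀^2 + Δ
  obtain ⟨γ, hγ⟩ := hsqΔ
  have hb₀ : (q:ℤ) ∣ ((γ.val:ℤ)^2 + Δ) := by
    rw [← ZMod.intCast_zmod_eq_zero_iff_dvd]
    push_cast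
    rw [ZMod.natCast_val, ZMod.cast_id]
    rw [show ((γ:ZMod q))^2 = γ * γ by ring, ← hγ]
    push_cast
    ring
  -- fix parity: b with 2q ∣ b^2 + Δ
  have hsqpar : ∀ x : ℤ, (2:ℤ) ∣ (x^2 - x) := fun x => by
    obtain ⟨t, ht⟩ := Int.even_mul_succ_self (x - 1)
    exact ⟨t, by linear_combination ht⟩
  have hqoddZ : (2:ℤ) ∣ ((q:ℤ) + 1) := by
    obtain ⟨t, ht⟩ : ∃ t, q = 2*t + 1 := ⟨q/2, by omega⟩
    refine ⟨(t:ℤ) + 1, ?_⟩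
    have : (q:ℤ) = 2*(t:ℤ) + 1 := by exact_mod_cast ht
    linarith
  have hpar : ∃ b : ℤ, (q:ℤ) ∣ (b^2 + Δ) ∧ (2:ℤ) ∣ (b^2 + Δ) := by
    rcases Int.even_or_odd ((γ.val:ℤ) + Δ) with he | ho
    · refine ⟨(γ.val:ℤ), hb₀, ?_⟩
      obtain ⟨t, ht⟩ := hsqpar (γ.val:ℤ)
      obtain ⟨u, hu⟩ := he
      exact ⟨t + u, by linarith⟩
    · refine ⟨(γ.val:ℤ) + q, ?_, ?_⟩
      · obtain ⟨t, ht⟩ := hb₀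
        exact ⟨t + 2*(γ.val:ℤ) + q, by linear_combination ht⟩
      · obtain ⟨t, ht⟩ := hsqpar ((γ.val:ℤ) + q)
        obtain ⟨u, hu⟩ := ho
        obtain ⟨v, hv⟩ := hqoddZ
        exact ⟨t + u + v, by linarith⟩
  obtain ⟨b, hbq, hb2⟩ := hpar
  obtain ⟨c, hc⟩ : ∃ c : ℤ, b^2 + Δ = 2*(q:ℤ)*c := by
    obtain ⟨t, ht⟩ := hbq
    have h2t : (2:ℤ) ∣ t := by
      rcases Int.even_or_odd t with he | ho
      · exact he.two_dvd
      · exfalso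
        obtain ⟨v, hv⟩ := hb2
        have hev : Even ((q:ℤ)*t) := by rw [← ht]; exact ⟨v, by linarith⟩
        rcases Int.even_mul.mp hev with h | h
        · obtain ⟨w, hw⟩ := h
          obtain ⟨w2, hw2⟩ := hqoddZ
          omega
        · obtain ⟨u, hu⟩ := ho
          obtain ⟨w, hw⟩ := h
          omega
    obtain ⟨u, hu⟩ := h2t
    exact ⟨u, by rw [ht, hu]; ring⟩
  -- the ternary form (2q, c, N, b, 0, s) has determinant 1, is positive, represents N
  have hdet : D3 (2*(q:ℤ)) c (N:ℤ) b 0 s = 1 := by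
    unfold D3
    linear_combination hNΔ - (N:ℤ)*hc
  have hiden : ∀ x y z : ℤ, 2*(q:ℤ)*Δ*(Q3 (2*(q:ℤ)) c (N:ℤ) b 0 s x y z)
      = Δ*(2*(q:ℤ)*x + b*y)^2 + (Δ*y + 2*(q:ℤ)*s*z)^2 + 2*(q:ℤ)*z^2 := by
    intro x y z
    unfold Q3
    linear_combination (2*(q:ℤ)*z^2)*hNΔ + (-Δ*y^2)*hc
  have hpos : ∀ x y z : ℤ, ¬(x = 0 ∧ y = 0 ∧ z = 0) → 0 < Q3 (2*(q:ℤ)) c (N:ℤ) b 0 s x y z := by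
    intro x y z hne
    have hid := hiden x y z
    have hrhs : 0 < Δ*(2*(q:ℤ)*x + b*y)^2 + (Δ*y + 2*(q:ℤ)*s*z)^2 + 2*(q:ℤ)*z^2 := by
      rcases eq_or_ne z 0 with hz | hz
      · rcases eq_or_ne y 0 with hy | hy
        · have hx : x ≠ 0 := by tauto
          subst hz hy
          have h2 : 0 < (2*(q:ℤ)*x + b*0)^2 := by
            have hne2 : 2*(q:ℤ)*x + b*0 ≠ 0 := by
              simp only [mul_zero, add_zero]
              exact mul_ne_zero (by positivity) hx
            positivity
          have h3 := mul_pos hΔpos h2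
          nlinarith [sq_nonneg (Δ*0 + 2*(q:ℤ)*s*0), h3, hqpos]
        · subst hz
          have h1 : 0 < (Δ*y + 2*(q:ℤ)*s*0)^2 := by
            have hne2 : Δ*y + 2*(q:ℤ)*s*0 ≠ 0 := by
              simp only [mul_zero, add_zero]
              exact mul_ne_zero (ne_of_gt hΔpos) hy
            positivity
          nlinarith [mul_nonneg (le_of_lt hΔpos) (sq_nonneg (2*(q:ℤ)*x + b*y)), h1, hqpos]
      · have h1 : 0 < 2*(q:ℤ)*z^2 := by positivity
        nlinarith [mul_nonneg (le_of_lt hΔpos) (sq_nonneg (2*(q:ℤ)*x + b*y)),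
          sq_nonneg (Δ*y + 2*(q:ℤ)*s*z), h1]
    rcases le_or_gt (Q3 (2*(q:ℤ)) c (N:ℤ) b 0 s x y z) 0 with h | h
    · exfalso
      have : 2*(q:ℤ)*Δ*(Q3 (2*(q:ℤ)) c (N:ℤ) b 0 s x y z) ≤ 0 :=
        mul_nonpos_of_nonneg_of_nonpos (by positivity) h
      rw [hid] at this; linarith
    · exact h
  have hrep : ∃ x y z : ℤ, Q3 (2*(q:ℤ)) c (N:ℤ) b 0 s x y z = (N:ℤ) :=
    ⟨0, 0, 1, by unfold Q3; ring⟩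
  exact red (2*(q:ℤ)) c (N:ℤ) b 0 s hpos hdet (N:ℤ) hrep

lemma finish_conv (n a b C : ℤ) (ha : a % 2 = 1) (hb : b % 2 = 1) (hC2 : C % 2 = 1)
    (hC3 : C % 3 ≠ 0) (h : 6*a^2 + 3*b^2 + 2*C^2 = 24*n + 11) :
    ∃ x y z : ℤ, n = x*(x+1) + y*(2*y+1) + z*(3*z+1) := by
  obtain ⟨x, hx⟩ : ∃ x, a = 2*x + 1 := ⟨(a-1)/2, by omega⟩
  have hb4 : b % 4 = 1 ∨ (-b) % 4 = 1 := by omega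
  have hC6' : C % 6 = 1 ∨ C % 6 = 5 := by omega
  have hC6 : C % 6 = 1 ∨ (-C) % 6 = 1 := by rcases hC6' with h' | h' <;> omega
  obtain ⟨B, hB4, hB2⟩ : ∃ B : ℤ, B % 4 = 1 ∧ B^2 = b^2 := by
    rcases hb4 with h' | h'
    · exact ⟨b, h', rfl⟩
    · exact ⟨-b, h', by ring⟩
  obtain ⟨C', hC'6, hC'2⟩ : ∃ C' : ℤ, C' % 6 = 1 ∧ C'^2 = C^2 := by
    rcases hC6 with h' | h'
    · exact ⟨C, h', rfl⟩
    · exact ⟨-C, h', by ring⟩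
  obtain ⟨y, hy⟩ : ∃ y, B = 4*y + 1 := ⟨(B-1)/4, by omega⟩
  obtain ⟨z, hz⟩ : ∃ z, C' = 6*z + 1 := ⟨(C'-1)/6, by omega⟩
  refine ⟨x, y, z, ?_⟩
  have h2 : 6*(2*x+1)^2 + 3*(4*y+1)^2 + 2*(6*z+1)^2 = 24*n + 11 := by
    rw [← hx, ← hy, ← hz]
    linear_combination h + 3*hB2 + 2*hC'2
  have h3 : 6*(2*x+1)^2 + 3*(4*y+1)^2 + 2*(6*z+1)^2
      = 24*(x*(x+1) + y*(2*y+1) + z*(3*z+1)) + 11 := by ring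
  linarith

lemma key_case (n : ℤ) (X Y Z : ℤ) (hsum : X^2 + Y^2 + Z^2 = 24*n + 11)
    (hX2 : X % 2 = 1) (hY2 : Y % 2 = 1) (hZ2 : Z % 2 = 1)
    (hX3 : X % 3 ≠ 0) (hY3 : Y % 3 ≠ 0) (hZ3 : Z % 3 = 0) :
    ∃ x y z : ℤ, n = x*(x+1) + y*(2*y+1) + z*(3*z+1) := by
  obtain ⟨t, ht⟩ : ∃ t, Z = 3*t := ⟨Z/3, by omega⟩
  have ht2 : t % 2 = 1 := by omega
  -- choose sign for Y
  obtain ⟨Y', hY'3, hY'2, hY'sq⟩ : ∃ Y' : ℤ, (X - Y') % 3 = 0 ∧ Y' % 2 = 1 ∧ Y'^2 = Y^2 := by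
    have hx' : X % 3 = 1 ∨ X % 3 = 2 := by omega
    have hy' : Y % 3 = 1 ∨ Y % 3 = 2 := by omega
    rcases (by rcases hx' with h1|h1 <;> rcases hy' with h2|h2 <;> omega :
      (X - Y) % 3 = 0 ∨ (X + Y) % 3 = 0) with h' | h'
    · exact ⟨Y, h', hY2, rfl⟩
    · exact ⟨-Y, by omega, by omega, by ring⟩
  obtain ⟨s, hs⟩ : ∃ s, X - Y' = 6*s := ⟨(X - Y')/6, by omega⟩
  obtain ⟨c, hc⟩ : ∃ c, X + Y' = 2*c := ⟨(X + Y')/2, by omega⟩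
  have hXc : X = c + 3*s := by omega
  have hYc : Y' = c - 3*s := by omega
  have hN2 : 2*c^2 + 18*s^2 + 9*t^2 = 24*n + 11 := by
    have h0 : X^2 + Y'^2 + (3*t)^2 = 24*n + 11 := by
      linear_combination hsum + hY'sq + (-(Z + 3*t))*ht
    linear_combination h0 + (-(X + c + 3*s))*hXc + (-(Y' + c - 3*s))*hYc
  have hcs : c % 2 ≠ s % 2 := by omega
  rcases (by omega : s % 2 = 0 ∨ s % 2 = 1) with hse | hso
  · -- s even, c odd : direct identity
    have hc2 : c % 2 = 1 := by omega
    have hfin : 6*(t+s)^2 + 3*(t-2*s)^2 + 2*c^2 = 24*n + 11 := by linear_combination hN2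
    have hc3 : c % 3 ≠ 0 := by
      intro h3
      obtain ⟨u, hu⟩ : ∃ u, c = 3*u := ⟨c/3, by omega⟩
      have : (3:ℤ) ∣ 24*n + 11 := ⟨2*(t+s)^2 + (t-2*s)^2 + 6*u^2, by
        rw [← hfin, hu]; ring⟩
      omega
    exact finish_conv n (t+s) (t-2*s) c (by omega) (by omega) hc2 hc3 hfin
  · -- s odd, c even
    have hc2 : c % 2 = 0 := by omega
    obtain ⟨t', ht'2, ht'sq, ha2⟩ : ∃ t' : ℤ, t' % 2 = 1 ∧ t'^2 = t^2 ∧ (c + s + t') % 4 = 2 := by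
      rcases (by omega : (c + s + t) % 4 = 0 ∨ (c + s + t) % 4 = 2) with h' | h'
      · exact ⟨-t, by omega, by ring, by omega⟩
      · exact ⟨t, ht2, rfl, h'⟩
    obtain ⟨a, hA⟩ : ∃ a, c + s + t' = 2*a := ⟨(c+s+t')/2, by omega⟩
    have haodd : a % 2 = 1 := by omega
    obtain ⟨c', hc'⟩ : ∃ c', -c + 3*s + 3*t' = 2*c' := ⟨(-c+3*s+3*t')/2, by omega⟩
    have hfin : 6*a^2 + 3*(t'-2*s)^2 + 2*c'^2 = 24*n + 11 := by
      have h4 : 4*(6*a^2 + 3*(t'-2*s)^2 + 2*c'^2) = 4*(24*n + 11) := by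
        calc 4*(6*a^2 + 3*(t'-2*s)^2 + 2*c'^2)
            = 6*(2*a)^2 + 12*(t'-2*s)^2 + 2*(2*c')^2 := by ring
        _ = 6*(c+s+t')^2 + 12*(t'-2*s)^2 + 2*(-c+3*s+3*t')^2 := by rw [hA, hc']
        _ = 4*(2*c^2 + 18*s^2 + 9*t'^2) := by ring
        _ = 4*(2*c^2 + 18*s^2 + 9*t^2) := by rw [ht'sq]
        _ = 4*(24*n + 11) := by rw [hN2]
      linarith
    have hc'2 : c' % 2 = 1 := by omega
    have hc'3 : c' % 3 ≠ 0 := by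
      intro h3
      obtain ⟨u, hu⟩ : ∃ u, c' = 3*u := ⟨c'/3, by omega⟩
      have : (3:ℤ) ∣ 24*n + 11 := ⟨2*a^2 + (t'-2*s)^2 + 6*u^2, by rw [← hfin, hu]; ring⟩
      omega
    exact finish_conv n a (t'-2*s) c' haodd (by omega) hc'2 hc'3 hfin

theorem stmt_3 (n : ℕ) : ∃ x y z : ℤ, (n : ℤ) = x*(x+1) + y*(2*y+1) + z*(3*z+1) := by
  obtain ⟨X, Y, Z, hsum⟩ := sum_three_squares (24*n + 11) (by omega)
  have hsum' : X^2 + Y^2 + Z^2 = 24*(n:ℤ) + 11 := by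
    rw [hsum]; push_cast; ring
  -- squares mod 4 and mod 3
  have sq4 : ∀ x : ℤ, (x % 2 = 0 ∧ x^2 % 4 = 0) ∨ (x % 2 = 1 ∧ x^2 % 4 = 1) := by
    intro x
    rcases (by omega : x % 2 = 0 ∨ x % 2 = 1) with h | h
    · left
      obtain ⟨k, hk⟩ : ∃ k, x = 2*k := ⟨x/2, by omega⟩
      exact ⟨h, by rw [hk, show (2*k)^2 = 4*k^2 by ring]; exact Int.mul_emod_right 4 _⟩
    · right
      obtain ⟨k, hk⟩ : ∃ k, x = 2*k+1 := ⟨x/2, by omega⟩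
      refine ⟨h, ?_⟩
      rw [hk, show (2*k+1)^2 = 1 + (k^2+k)*4 by ring, Int.add_mul_emod_self_right]
      norm_num
  have sq3 : ∀ x : ℤ, (x % 3 = 0 ∧ x^2 % 3 = 0) ∨ (x % 3 ≠ 0 ∧ x^2 % 3 = 1) := by
    intro x
    rcases (by omega : x % 3 = 0 ∨ x % 3 = 1 ∨ x % 3 = 2) with h | h | h
    · left
      obtain ⟨k, hk⟩ : ∃ k, x = 3*k := ⟨x/3, by omega⟩
      exact ⟨h, by rw [hk, show (3*k)^2 = 3*(3*k^2) by ring]; exact Int.mul_emod_right 3 _⟩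
    · right
      obtain ⟨k, hk⟩ : ∃ k, x = 3*k+1 := ⟨x/3, by omega⟩
      refine ⟨by omega, ?_⟩
      rw [hk, show (3*k+1)^2 = 1 + (3*k^2+2*k)*3 by ring, Int.add_mul_emod_self_right]
      norm_num
    · right
      obtain ⟨k, hk⟩ : ∃ k, x = 3*k+2 := ⟨x/3, by omega⟩
      refine ⟨by omega, ?_⟩
      rw [hk, show (3*k+2)^2 = 1 + (3*k^2+4*k+1)*3 by ring, Int.add_mul_emod_self_right]
      norm_num
  have hX4 := sq4 X; have hY4 := sq4 Y; have hZ4 := sq4 Z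
  have hX3 := sq3 X; have hY3 := sq3 Y; have hZ3 := sq3 Z
  -- all odd
  have hodd : X % 2 = 1 ∧ Y % 2 = 1 ∧ Z % 2 = 1 := by omega
  -- exactly one divisible by 3; three cases
  rcases hX3 with ⟨hX30, hX3s⟩ | ⟨hX3n, hX3s⟩ <;>
    rcases hY3 with ⟨hY30, hY3s⟩ | ⟨hY3n, hY3s⟩ <;>
      rcases hZ3 with ⟨hZ30, hZ3s⟩ | ⟨hZ3n, hZ3s⟩
  · exfalso; omega
  · exfalso; omega
  · exfalso; omega
  · -- X div by 3
    exact key_case (n:ℤ) Y Z X (by linarith) hodd.2.1 hodd.2.2 hodd.1 hY3n hZ3n hX30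
  · exfalso; omega
  · -- Y div by 3
    exact key_case (n:ℤ) X Z Y (by linarith) hodd.1 hodd.2.2 hodd.2.1 hX3n hZ3n hY30
  · -- Z div by 3
    exact key_case (n:ℤ) X Y Z hsum' hodd.1 hodd.2.1 hodd.2.2 hX3n hY3n hZ30
  · exfalso; omega
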